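/- Consider the four-job instance on a path with jobs e₁: r=0, d=1, p=1; e₂: r=0, d=3, p=2; e₃: r=1, d=4, p=2; e₄: r=3, d=4, p=1, and time horizon T = 4. Then (i) for every feasible non-preemptive schedule, the union of the four processing intervals contains all of [0,4], so the total connectivity time is 0; and (ii) there exists a feasible preemptive schedule (e₂ processed during [0,2], e₃ during [1,2]∪[3,4], e₁ during [0,1], e₄ during [3,4]) whose processing sets leave the interval [2,3] free, so its total connectivity time is at least 1. Hence the power of preemption for MAXCONNECTIVITY on a path is unbounded. -/

import Mathlib

open MeasureTheory Set
open scoped ENNReal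

/-- Feasibility of a non-preemptive schedule of jobs on a path: job `i` starts at `s i`
within its window and is processed during `[s i, s i + p i]`. -/
def PathNPFeasible {ι : Type*} (r d p : ι → ℝ) (s : ι → ℝ) : Prop :=
  ∀ i, r i ≤ s i ∧ s i + p i ≤ d i

/-- Feasibility of a preemptive schedule of jobs on a path: job `i` is processed during the
measurable set `S i ⊆ [r i, d i]` of measure `p i`. -/
def PathPFeasible {ι : Type*} (r d p : ι → ℝ) (S : ι → Set ℝ) : Prop :=
  ∀ i, MeasurableSet (S i) ∧ S i ⊆ Set.Icc (r i) (d i) ∧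
    volume (S i) = ENNReal.ofReal (p i)

/-- The busy time of a non-preemptive schedule: the measure of the union of the
processing intervals (= the total disconnected time on a path). -/
noncomputable def npBusy {ι : Type*} (p : ι → ℝ) (s : ι → ℝ) : ℝ≥0∞ :=
  volume (⋃ i, Set.Icc (s i) (s i + p i))

/-- The busy time of a preemptive schedule: the measure of the union of the
processing sets (= the total disconnected time on a path). -/
noncomputable def pBusy {ι : Type*} (S : ι → Set ℝ) : ℝ≥0∞ :=
  volume (⋃ i, S i)

/-- Release dates of the four-job instance `e₁, e₂, e₃, e₄`. -/
def rr : Fin 4 → ℝ := ![0, 0, 1, 3]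

/-- Deadlines of the four-job instance. -/
def dd : Fin 4 → ℝ := ![1, 3, 4, 4]

/-- Processing times of the four-job instance. -/
def pp : Fin 4 → ℝ := ![1, 2, 2, 1]

/-- The claimed preemptive schedule: `e₁` during `[0,1]`, `e₂` during `[0,2]`,
`e₃` during `[1,2] ∪ [3,4]`, `e₄` during `[3,4]`. -/
def Spmtn : Fin 4 → Set ℝ :=
  ![Set.Icc 0 1, Set.Icc 0 2, Set.Icc 1 2 ∪ Set.Icc 3 4, Set.Icc 3 4]

/-- **Theorem 7 (unbounded power of preemption for MAXCONNECTIVITY on a path).**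
For the four-job instance with time horizon `T = 4`: (i) the processing intervals of every
feasible non-preemptive schedule cover all of `[0,4]`, so the total connectivity time is `0`;
and (ii) the given preemptive schedule is feasible, leaves the interior of `[2,3]` free of
processing, and has total connectivity time at least `1`. -/
theorem power_of_preemption_unbounded_max :
    (∀ s : Fin 4 → ℝ, PathNPFeasible rr dd pp s →
      (Set.Icc (0 : ℝ) 4 ⊆ ⋃ i, Set.Icc (s i) (s i + pp i)) ∧
      volume (Set.Icc (0 : ℝ) 4 \ ⋃ i, Set.Icc (s i) (s i + pp i)) = 0) ∧
    (PathPFeasible rr dd pp Spmtn ∧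
      Set.Ioo (2 : ℝ) 3 ∩ (⋃ i, Spmtn i) = ∅ ∧
      1 ≤ volume (Set.Icc (0 : ℝ) 4 \ ⋃ i, Spmtn i)) := by
  have hnotin : ∀ x : ℝ, 2 < x → x < 3 → ∀ i, x ∉ Spmtn i := by
    intro x h2 h3 i
    fin_cases i
    · simp only [Spmtn]; simp [Set.mem_Icc]; intro; linarith
    · simp only [Spmtn]; simp [Set.mem_Icc]; intro; linarith
    · simp only [Spmtn]; simp [Set.mem_Icc]
      exact ⟨fun _ => by linarith, fun _ => by linarith⟩
    · simp only [Spmtn]; simp [Set.mem_Icc]; intro; linarith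
  constructor
  · intro s hs
    have h0 := hs 0; have h1 := hs 1; have h2 := hs 2; have h3 := hs 3
    simp only [rr, dd, pp, Matrix.cons_val_zero, Matrix.cons_val_one, Matrix.head_cons,
      Matrix.cons_val_two, Matrix.tail_cons, Matrix.cons_val_three] at h0 h1 h2 h3
    have hcov : Set.Icc (0 : ℝ) 4 ⊆ ⋃ i, Set.Icc (s i) (s i + pp i) := by
      intro x hx
      simp only [Set.mem_Icc] at hx
      simp only [Set.mem_iUnion, Set.mem_Icc]
      by_cases hx1 : x ≤ s 0 + pp 0
      · exact ⟨0, by linarith [h0.1], hx1⟩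
      by_cases hx3 : s 3 ≤ x
      · refine ⟨3, hx3, ?_⟩
        simp only [pp, Matrix.cons_val_three, Matrix.tail_cons, Matrix.head_cons]
        linarith [h3.1]
      push_neg at hx1 hx3
      simp only [pp, Matrix.cons_val_zero] at hx1
      by_cases hx2 : x ≤ s 1 + 2
      · exact ⟨1, by linarith,
          by simp only [pp, Matrix.cons_val_one, Matrix.head_cons, Matrix.cons_val_zero]; linarith⟩
      · push_neg at hx2
        exact ⟨2, by linarith,
          by simp only [pp, Matrix.cons_val_two, Matrix.tail_cons, Matrix.head_cons]
             linarith⟩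
    refine ⟨hcov, ?_⟩
    rw [Set.diff_eq_empty.mpr hcov]
    simp
  · refine ⟨?_, ?_, ?_⟩
    · intro i
      fin_cases i
      · exact ⟨measurableSet_Icc,
          Icc_subset_Icc le_rfl (by norm_num [dd]),
          by show volume (Icc (0:ℝ) 1) = ENNReal.ofReal (pp 0)
             rw [Real.volume_Icc]; norm_num [pp]⟩
      · exact ⟨measurableSet_Icc,
          Icc_subset_Icc le_rfl (by norm_num [dd]),
          by show volume (Icc (0:ℝ) 2) = ENNReal.ofReal (pp 1)
             rw [Real.volume_Icc]; norm_num [pp]⟩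
      · refine ⟨measurableSet_Icc.union measurableSet_Icc,
          Set.union_subset (Icc_subset_Icc (by norm_num [rr]) (by norm_num [dd]))
            (Icc_subset_Icc (by norm_num [rr]) (by norm_num [dd])), ?_⟩
        show volume (Icc (1:ℝ) 2 ∪ Icc 3 4) = ENNReal.ofReal (pp 2)
        rw [measure_union ?_ measurableSet_Icc, Real.volume_Icc, Real.volume_Icc,
          ← ENNReal.ofReal_add] <;> try norm_num [pp, Matrix.cons_val_two, Matrix.tail_cons, Matrix.head_cons]
        rw [Set.disjoint_iff]
        rintro x ⟨⟨_, h1⟩, h2, _⟩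
        exfalso; linarith
      · exact ⟨measurableSet_Icc,
          Icc_subset_Icc (by norm_num [rr]) (by norm_num [dd]),
          by show volume (Icc (3:ℝ) 4) = ENNReal.ofReal (pp 3)
             rw [Real.volume_Icc]; norm_num [pp, Matrix.cons_val_three, Matrix.tail_cons, Matrix.head_cons]⟩
    · ext x
      simp only [Set.mem_inter_iff, Set.mem_Ioo, Set.mem_iUnion, Set.mem_empty_iff_false,
        iff_false, not_and, not_exists]
      rintro ⟨h2, h3⟩
      exact hnotin x h2 h3
    · have hsub : Set.Ioo (2 : ℝ) 3 ⊆ Set.Icc (0 : ℝ) 4 \ ⋃ i, Spmtn i := by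
        rintro x ⟨h2, h3⟩
        refine ⟨⟨by linarith, by linarith⟩, ?_⟩
        simp only [Set.mem_iUnion, not_exists]
        exact hnotin x h2 h3
      calc (1 : ℝ≥0∞) = volume (Set.Ioo (2 : ℝ) 3) := by rw [Real.volume_Ioo]; norm_num
        _ ≤ _ := measure_mono hsub
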